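/- Let r : Fin n → H be unit vectors with 0 ≤ ⟨r_i, r_j⟩ ≤ E for i ≠ j, and let t ∈ H be a unit vector with 0 ≤ ⟨t, r_k⟩ ≤ E for all k. Set W = ∑_k r_k. Then for any i, ⟨W, r_i − t⟩² ≥ 1 − 2nE(1 + (n−1)E) whenever the right-hand side is nonnegative; more precisely ⟨W, r_i⟩² + ⟨W, t⟩² − 2⟨W, r_i⟩⟨W, t⟩ ≥ 1 − 2nE(1+(n−1)E). -/
import Mathlib


open RealInnerProductSpace

theorem stmt_6 {H : Type*} [NormedAddCommGroup H] [InnerProductSpace ℝ H]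
    (n : ℕ) (r : Fin n → H) (E : ℝ) (hE : 0 ≤ E)
    (hnorm : ∀ i, ‖r i‖ = 1)
    (hnonneg : ∀ i j, 0 ≤ ⟪r i, r j⟫)
    (hbound : ∀ i j, i ≠ j → ⟪r i, r j⟫ ≤ E)
    (t : H) (ht : ‖t‖ = 1)
    (htr : ∀ k, 0 ≤ ⟪t, r k⟫ ∧ ⟪t, r k⟫ ≤ E) :
    ∀ i, ⟪(∑ k, r k), r i⟫ ^ 2 + ⟪(∑ k, r k), t⟫ ^ 2
        - 2 * ⟪(∑ k, r k), r i⟫ * ⟪(∑ k, r k), t⟫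
      ≥ 1 - 2 * (n : ℝ) * E * (1 + ((n : ℝ) - 1) * E) := by
  intro i
  have hn : 1 ≤ n := Fin.pos i
  have hself : ⟪r i, r i⟫ = (1 : ℝ) := by
    rw [real_inner_self_eq_norm_sq, hnorm]; norm_num
  have ha : ⟪(∑ k, r k), r i⟫ = ∑ k, ⟪r k, r i⟫ := by
    rw [sum_inner]
  have hb : ⟪(∑ k, r k), t⟫ = ∑ k, ⟪r k, t⟫ := by
    rw [sum_inner]
  set a := ⟪(∑ k, r k), r i⟫ with hadef
  set b := ⟪(∑ k, r k), t⟫ with hbdef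
  have ha1 : (1 : ℝ) ≤ a := by
    rw [ha]
    calc (1:ℝ) = ⟪r i, r i⟫ := hself.symm
    _ ≤ ∑ k, ⟪r k, r i⟫ :=
        Finset.single_le_sum (fun k _ => hnonneg k i) (Finset.mem_univ i)
  have ha2 : a ≤ 1 + ((n : ℝ) - 1) * E := by
    rw [ha, ← Finset.sum_erase_add _ _ (Finset.mem_univ i), hself]
    have : ∑ k ∈ Finset.univ.erase i, ⟪r k, r i⟫ ≤ ((n : ℝ) - 1) * E := by
      calc ∑ k ∈ Finset.univ.erase i, ⟪r k, r i⟫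
          ≤ ∑ _k ∈ Finset.univ.erase i, E :=
            Finset.sum_le_sum (fun k hk => hbound k i (Finset.ne_of_mem_erase hk))
        _ = ((n : ℝ) - 1) * E := by
            rw [Finset.sum_const, Finset.card_erase_of_mem (Finset.mem_univ i)]
            simp [Nat.cast_sub hn]
    linarith
  have hb1 : (0 : ℝ) ≤ b := by
    rw [hb]
    exact Finset.sum_nonneg fun k _ => by rw [real_inner_comm]; exact (htr k).1
  have hb2 : b ≤ (n : ℝ) * E := by
    rw [hb]
    calc ∑ k, ⟪r k, t⟫ ≤ ∑ _k : Fin n, E :=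
          Finset.sum_le_sum (fun k _ => by rw [real_inner_comm]; exact (htr k).2)
      _ = (n : ℝ) * E := by simp
  nlinarith [sq_nonneg (a - b), sq_nonneg b, mul_nonneg hE (sub_nonneg.mpr ha1),
    mul_nonneg hb1 (sub_nonneg.mpr ha1)]
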